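/- The standard Randomized Mechanism (RM: leftmost with prob 1/4, rightmost with prob 1/4, midpoint with prob 1/2) has approximation ratio at least (n+2)/4 for the maximum average group cost: on the profile with one agent at 0, one at 1, and n-2 at 1/2, all in one group, RM's expected magc is (n+2)/(4n) while the optimum is 1/n. -/

import Mathlib

open Finset

variable {n m : ℕ}

/-- Members of group `j`. -/
def grp (g : Fin n → Fin m) (j : Fin m) : Finset (Fin n) :=
  Finset.univ.filter (fun i => g i = j)

/-- Maximum total group cost. -/
noncomputable def mtgc (x : Fin n → ℝ) (g : Fin n → Fin m) (y : ℝ) : ℝ :=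
  ⨆ j : Fin m, ∑ i ∈ grp g j, |y - x i|

/-- Maximum average group cost. -/
noncomputable def magc (x : Fin n → ℝ) (g : Fin n → Fin m) (y : ℝ) : ℝ :=
  ⨆ j : Fin m, (∑ i ∈ grp g j, |y - x i|) / (grp g j).card

/-- Left median of a multiset of reals (`⌈k/2⌉`-th smallest). -/
noncomputable def medianOf (s : Multiset ℝ) : ℝ :=
  (s.sort (· ≤ ·)).getD ((Multiset.card s - 1) / 2) 0

/-- Left median of the locations of the members of group `j`. -/
noncomputable def groupMedian (x : Fin n → ℝ) (g : Fin n → Fin m) (j : Fin m) : ℝ :=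
  medianOf ((grp g j).val.map x)

/-- A largest group, ties broken by the smallest index. -/
noncomputable def majGroup (g : Fin n → Fin m) [NeZero m] : Fin m :=
  (Finset.univ.filter
    (fun j => ∀ k : Fin m, (grp g k).card ≤ (grp g j).card)).min' (by
      obtain ⟨b, -, hb⟩ :=
        Finset.exists_max_image Finset.univ (fun j => (grp g j).card) Finset.univ_nonempty
      exact ⟨b, Finset.mem_filter.mpr ⟨Finset.mem_univ _, fun k => hb k (Finset.mem_univ k)⟩⟩)

/-- Majority Group Deterministic Mechanism. -/
noncomputable def MGDM (x : Fin n → ℝ) (g : Fin n → Fin m) [NeZero m] : ℝ :=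
  groupMedian x g (majGroup g)

noncomputable def avgc (x : Fin n → ℝ) (g : Fin n → Fin m) (j : Fin m) (y : ℝ) : ℝ :=
  (∑ i ∈ grp g j, |y - x i|) / (grp g j).card

noncomputable def maxc (x : Fin n → ℝ) (g : Fin n → Fin m) (j : Fin m) (y : ℝ) : ℝ :=
  sSup ((fun i => |y - x i|) '' {i | g i = j})

noncomputable def minc (x : Fin n → ℝ) (g : Fin n → Fin m) (j : Fin m) (y : ℝ) : ℝ :=
  sInf ((fun i => |y - x i|) '' {i | g i = j})

noncomputable def IIF1 (x : Fin n → ℝ) (g : Fin n → Fin m) (y : ℝ) : ℝ :=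
  (⨆ j : Fin m, avgc x g j y) + ⨆ j : Fin m, (maxc x g j y - minc x g j y)

lemma magc_eq (n : ℕ) (hn : 3 ≤ n) (x : Fin n → ℝ) (g : Fin n → Fin 1)
    (hx : ∀ i : Fin n, x i = if (i : ℕ) = 0 then 0 else if (i : ℕ) = 1 then 1 else 1/2)
    (y : ℝ) :
    magc x g y = (|y| + |y - 1| + ((n : ℝ) - 2) * |y - 1/2|) / n := by
  have h0 : 0 < n := by omega
  have h1 : 1 < n := by omega
  set i0 : Fin n := ⟨0, h0⟩
  set i1 : Fin n := ⟨1, h1⟩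
  have hgrp : grp g 0 = Finset.univ := by
    ext i
    simp [grp, Subsingleton.elim (g i) 0]
  have hsum : ∑ i ∈ grp g 0, |y - x i|
      = (n : ℝ) * |y - 1/2| + (|y| - |y - 1/2|) + (|y - 1| - |y - 1/2|) := by
    rw [hgrp]
    have : ∀ i : Fin n, |y - x i| = |y - 1/2|
        + (if i = i0 then |y| - |y - 1/2| else 0)
        + (if i = i1 then |y - 1| - |y - 1/2| else 0) := by
      intro i
      rw [hx i]
      rcases eq_or_ne i i0 with h | h
      · have : (i : ℕ) = 0 := by rw [h]
        simp [h, this, i0, i1, Fin.ext_iff]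
      · have hi0 : (i : ℕ) ≠ 0 := by
          intro hc; exact h (Fin.ext hc)
        rcases eq_or_ne i i1 with h1' | h1'
        · have : (i : ℕ) = 1 := by rw [h1']
          simp [h, h1', this, hi0, i0, i1, Fin.ext_iff]
        · have hi1 : (i : ℕ) ≠ 1 := by
            intro hc; exact h1' (Fin.ext hc)
          simp [h, h1', hi0, hi1]
    rw [Finset.sum_congr rfl (fun i _ => this i)]
    rw [Finset.sum_add_distrib, Finset.sum_add_distrib, Finset.sum_const,
      Finset.sum_ite_eq' Finset.univ i0, Finset.sum_ite_eq' Finset.univ i1]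
    simp [Finset.card_univ, mul_comm]
  have hcard : ((grp g 0).card : ℝ) = n := by rw [hgrp]; simp
  have : magc x g y = (∑ i ∈ grp g 0, |y - x i|) / (grp g 0).card := by
    unfold magc
    exact ciSup_unique
  rw [this, hsum, hcard]
  ring_nf

/-- On the single-group profile with one agent at `0`, one at `1` and `n - 2`
at `1/2`, the Randomized Mechanism's expected maximum average group cost is
`(n+2)/(4n)` while the optimum (at `1/2`) is `1/n`; hence RM has approximation
ratio at least `(n+2)/4` for `magc`. -/
theorem stmt15 (n : ℕ) (hn : 3 ≤ n) (x : Fin n → ℝ) (g : Fin n → Fin 1)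
    (hx : ∀ i : Fin n, x i = if (i : ℕ) = 0 then 0 else if (i : ℕ) = 1 then 1 else 1/2) :
    1/4 * magc x g 0 + 1/4 * magc x g 1 + 1/2 * magc x g (1/2)
        = ((n : ℝ) + 2) / (4 * n) ∧
    magc x g (1/2) = 1 / (n : ℝ) ∧
    ∀ y : ℝ, 1 / (n : ℝ) ≤ magc x g y := by
  have hmagc := fun y => magc_eq n hn x g hx y
  have hn0 : (0 : ℝ) < n := by positivity
  have hne : (n : ℝ) ≠ 0 := ne_of_gt hn0
  refine ⟨?_, ?_, ?_⟩
  · rw [hmagc 0, hmagc 1, hmagc (1/2)]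
    rw [show |(0:ℝ)| = 0 by simp, show |(0:ℝ) - 1| = 1 by rw [abs_of_nonpos] <;> norm_num,
      show |(0:ℝ) - 1/2| = 1/2 by rw [abs_of_nonpos] <;> norm_num,
      show |(1:ℝ)| = 1 by simp, show |(1:ℝ) - 1| = 0 by norm_num,
      show |(1:ℝ) - 1/2| = 1/2 by rw [abs_of_nonneg] <;> norm_num,
      show |(1:ℝ)/2| = 1/2 by rw [abs_of_nonneg] <;> norm_num,
      show |(1:ℝ)/2 - 1| = 1/2 by rw [abs_of_nonpos] <;> norm_num,
      show |(1:ℝ)/2 - 1/2| = 0 by norm_num]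
    field_simp
    ring
  · rw [hmagc (1/2)]
    rw [show |(1:ℝ)/2| = 1/2 by rw [abs_of_nonneg] <;> norm_num,
      show |(1:ℝ)/2 - 1| = 1/2 by rw [abs_of_nonpos] <;> norm_num,
      show |(1:ℝ)/2 - 1/2| = 0 by norm_num]
    ring
  · intro y
    rw [hmagc y]
    have h1 : (1 : ℝ) ≤ |y| + |y - 1| + ((n : ℝ) - 2) * |y - 1/2| := by
      have ha : (1 : ℝ) ≤ |y| + |y - 1| := by
        have := abs_sub_abs_le_abs_sub y (y - 1)
        have h2 := abs_sub (y) (y - 1)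
        calc (1:ℝ) = |y - (y - 1)| := by norm_num
        _ ≤ |y| + |y - 1| := abs_sub _ _
      have hb : (0 : ℝ) ≤ ((n : ℝ) - 2) * |y - 1/2| := by
        apply mul_nonneg
        · have : (3 : ℝ) ≤ n := by exact_mod_cast hn
          linarith
        · exact abs_nonneg _
      linarith
    rw [div_le_div_iff₀ hn0 hn0]
    nlinarith
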